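/- Let G = ℤ/2 and k = ℂ. The rings R₁ = ℂ[y,z]/(z²) and R₂ = ℂ[y,z]/(z²) ⊗_ℂ ℂ[ℤ/2] are not isomorphic as rings. Consequently, Hochschild cohomology of the dg-algebra of cochains is not invariant under Morita equivalence of orbifold groupoids. -/

import Mathlib

open scoped TensorProduct

/-- The ring `ℂ[y,z]/(z²)`, with `y = X 0` and `z = X 1`. -/
noncomputable abbrev Rone : Type :=
  MvPolynomial (Fin 2) ℂ ⧸ Ideal.span {(MvPolynomial.X 1 : MvPolynomial (Fin 2) ℂ) ^ 2}

open MvPolynomial in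
lemma primeX1 : Prime (MvPolynomial.X 1 : MvPolynomial (Fin 2) ℂ) := by
  have h0 : Prime (MvPolynomial.X 0 : MvPolynomial (Fin 1) ℂ) := by
    rw [← MulEquiv.prime_iff (MvPolynomial.finSuccEquiv ℂ 0).toMulEquiv]
    have : (MvPolynomial.finSuccEquiv ℂ 0).toMulEquiv (MvPolynomial.X 0) = Polynomial.X :=
      MvPolynomial.finSuccEquiv_X_zero
    rw [this]
    exact Polynomial.prime_X
  have : (1 : Fin 2) = (Fin.succ 0) := rfl
  rw [← MulEquiv.prime_iff (MvPolynomial.finSuccEquiv ℂ 1).toMulEquiv]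
  have h2 : (MvPolynomial.finSuccEquiv ℂ 1).toMulEquiv (MvPolynomial.X 1)
      = Polynomial.C (MvPolynomial.X 0) := by
    rw [this]; exact MvPolynomial.finSuccEquiv_X_succ
  rw [h2, Polynomial.prime_C_iff]
  exact h0

open MvPolynomial in
lemma Rone_idem (x : Rone) (h : x * x = x) : x = 0 ∨ x = 1 := by
  obtain ⟨p, rfl⟩ := Ideal.Quotient.mk_surjective x
  set I : Ideal (MvPolynomial (Fin 2) ℂ) :=
    Ideal.span {(MvPolynomial.X 1 : MvPolynomial (Fin 2) ℂ) ^ 2} with hI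
  have hp : p * p - p ∈ I := by
    rw [← Ideal.Quotient.eq_zero_iff_mem]
    rw [map_sub, map_mul, h, sub_self]
  obtain ⟨q, hq⟩ := Ideal.mem_span_singleton.mp hp
  have hd : (MvPolynomial.X 1 : MvPolynomial (Fin 2) ℂ) ∣ p * (p - 1) := by
    refine ⟨MvPolynomial.X 1 * q, ?_⟩
    linear_combination hq
  rcases primeX1.2.2 p (p - 1) hd with ⟨r, hr⟩ | ⟨r, hr⟩
  · left
    rw [Ideal.Quotient.eq_zero_iff_mem]
    refine Ideal.mem_span_singleton.mpr ⟨r * r - q, ?_⟩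
    linear_combination (p + MvPolynomial.X 1 * r) * hr - hq
  · right
    rw [← sub_eq_zero, ← map_one (Ideal.Quotient.mk I), ← map_sub,
      Ideal.Quotient.eq_zero_iff_mem]
    refine Ideal.mem_span_singleton.mpr ⟨q - r * r, ?_⟩
    linear_combination hq - (p - 1 + MvPolynomial.X 1 * r) * hr

noncomputable abbrev Agrp : Type := MonoidAlgebra ℂ (ZMod 2)

/-- counit `Rone → ℂ`, evaluation at 0. -/
noncomputable def eps : Rone →ₐ[ℂ] ℂ :=
  Ideal.Quotient.liftₐ _ (MvPolynomial.aeval (fun _ => (0 : ℂ))) (by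
    intro a ha
    obtain ⟨b, rfl⟩ := Ideal.mem_span_singleton.mp ha
    simp)

noncomputable def phi : (Rone ⊗[ℂ] Agrp) →ₐ[ℂ] Agrp :=
  Algebra.TensorProduct.lift ((Algebra.ofId ℂ Agrp).comp eps) (AlgHom.id ℂ Agrp)
    (fun _ _ => Commute.all _ _)

set_option synthInstance.maxHeartbeats 1000000 in
set_option maxHeartbeats 1000000 in
/-- The rings `R₁ = ℂ[y,z]/(z²)` and
`R₂ = ℂ[y,z]/(z²) ⊗_ℂ ℂ[ℤ/2]` are not isomorphic as rings.  (Consequently, the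
Hochschild cohomology of the dg-algebra of cochains is not invariant under Morita
equivalence of orbifold groupoids.) -/
theorem stmt16 : IsEmpty (Rone ≃+* (Rone ⊗[ℂ] MonoidAlgebra ℂ (ZMod 2))) := by
  constructor
  intro f
  set h : Agrp := MonoidAlgebra.single (0 : ZMod 2) (1 : ℂ) with hh
  have hhh : h * h = h := by
    rw [hh, MonoidAlgebra.single_mul_single]
    norm_num
  have h0 : h ≠ 0 := fun H => one_ne_zero (MonoidAlgebra.single_eq_zero.mp H)
  have h1 : h ≠ 1 := by
    intro H
    have := congrArg (fun f : Agrp => f.coeff 0) H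
    simp [hh, MonoidAlgebra.one_def, MonoidAlgebra.coeff_single, Finsupp.single_apply] at this
  set e : Rone ⊗[ℂ] Agrp := (1 : Rone) ⊗ₜ[ℂ] h with he
  have hee : e * e = e := by
    rw [he, Algebra.TensorProduct.tmul_mul_tmul, one_mul, hhh]
  have hphi : phi e = h := by
    rw [he]
    simp [phi, Algebra.TensorProduct.lift_tmul, ← MonoidAlgebra.one_def]
  have hx : f.symm e * f.symm e = f.symm e := by
    rw [← map_mul, hee]
  rcases Rone_idem _ hx with hz | hz
  · have : e = 0 := by
      rw [← f.apply_symm_apply e, hz, map_zero]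
    exact h0 (by rw [← hphi, this, map_zero])
  · have : e = 1 := by
      rw [← f.apply_symm_apply e, hz, map_one]
    exact h1 (by rw [← hphi, this]; exact phi.map_one)
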